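/- arXiv:2103.15528 — 2 statements merged into one kernel-verified Lean document; each statement's English description precedes it below -/
import Mathlib

section
/- For every natural number n and q > 0, the analytic continuation of the alternating Hurwitz zeta function satisfies ζ_E(-n, q) = (1/2) E_n(q), where E_n is the n-th Euler polynomial. In particular ζ_E(0, q) = 1/2. -/
/-- The `n`-th Euler polynomial, defined via the recurrence coming from the
generating function `2 e^{xt}/(e^t + 1) = ∑ E_n(x) t^n/n!`. -/
noncomputable def eulerPoly : ℕ → ℝ → ℝ
  | n => fun x => x ^ n - (1/2) *
      ∑ k ∈ (Finset.range n).attach, (n.choose k.1 : ℝ) * eulerPoly k.1 x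
  termination_by n => n
  decreasing_by exact Finset.mem_range.mp k.2

open Finset fwdDiff Complex

lemma eulerPoly_def (n : ℕ) (x : ℝ) :
    eulerPoly n x = x ^ n - (1/2) *
      ∑ k ∈ (Finset.range n).attach, (n.choose k.1 : ℝ) * eulerPoly k.1 x := by
  rw [eulerPoly]

lemma eulerPoly_zero (x : ℝ) : eulerPoly 0 x = 1 := by
  rw [eulerPoly_def]; simp

lemma eulerPoly_fe (n : ℕ) (x : ℝ) :
    eulerPoly n x + eulerPoly n (x + 1) = 2 * x ^ n := by
  induction n using Nat.strong_induction_on with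
  | _ n ih =>
    rw [eulerPoly_def n x, eulerPoly_def n (x + 1)]
    have h1 : ∑ k ∈ (Finset.range n).attach, (n.choose k.1 : ℝ) * eulerPoly k.1 x
        + ∑ k ∈ (Finset.range n).attach, (n.choose k.1 : ℝ) * eulerPoly k.1 (x+1)
        = ∑ k ∈ (Finset.range n).attach, (n.choose k.1 : ℝ) * (2 * x ^ k.1) := by
      rw [← Finset.sum_add_distrib]
      refine Finset.sum_congr rfl fun k _ => ?_
      rw [← mul_add, ih k.1 (Finset.mem_range.mp k.2)]
    have h2 : ∑ k ∈ (Finset.range n).attach, (n.choose k.1 : ℝ) * (2 * x ^ k.1)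
        = 2 * ((x+1)^n - x^n) := by
      rw [Finset.sum_attach (range n) (fun k => (n.choose k : ℝ) * (2 * x ^ k))]
      have hb : (x + 1)^n = ∑ k ∈ range (n+1), x ^ k * (1:ℝ)^(n-k) * n.choose k :=
        add_pow x 1 n
      rw [Finset.sum_range_succ] at hb
      simp only [one_pow, mul_one, Nat.choose_self, Nat.cast_one] at hb
      have : ∑ k ∈ range n, (n.choose k : ℝ) * (2 * x ^ k)
          = 2 * ∑ k ∈ range n, x ^ k * (n.choose k : ℝ) := by
        rw [Finset.mul_sum]; exact Finset.sum_congr rfl fun k _ => by ring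
      rw [this, hb]; ring
    linear_combination (-(1/2 : ℝ)) * h1 + (-(1/2 : ℝ)) * h2

lemma eulerPoly_isPoly (n : ℕ) : ∃ P : Polynomial ℝ, ∀ x, eulerPoly n x = P.eval x := by
  induction n using Nat.strong_induction_on with
  | _ n ih =>
    choose P hP using ih
    refine ⟨Polynomial.X ^ n - Polynomial.C (1/2) *
      ∑ k ∈ (Finset.range n).attach, Polynomial.C (n.choose k.1 : ℝ) *
        P k.1 (Finset.mem_range.mp k.2), fun x => ?_⟩
    rw [eulerPoly_def]
    simp only [Polynomial.eval_sub, Polynomial.eval_pow, Polynomial.eval_X,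
      Polynomial.eval_mul, Polynomial.eval_C, Polynomial.eval_finset_sum]
    congr 1
    congr 1
    exact Finset.sum_congr rfl fun k _ => by
      rw [hP k.1 (Finset.mem_range.mp k.2)]


lemma fwdDiff_iter_pow_eq_zero {A : Type*} [CommRing A] :
    ∀ {n N : ℕ}, n < N → (fwdDiff (1:A))^[N] (fun y : A => y ^ n) = fun _ => 0 := by
  intro n
  induction n using Nat.strong_induction_on with
  | _ n ih =>
    intro N hnN
    obtain ⟨M, rfl⟩ : ∃ M, N = M + 1 := ⟨N - 1, by omega⟩
    rw [Function.iterate_succ_apply]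
    have hΔ : Δ_[(1:A)] (fun y : A => y ^ n)
        = ∑ k ∈ range n, (n.choose k : A) • (fun y : A => y ^ k) := by
      funext y
      have hb := add_pow y (1:A) n
      rw [Finset.sum_range_succ] at hb
      simp only [one_pow, mul_one, Nat.choose_self, Nat.cast_one] at hb
      simp only [fwdDiff, Finset.sum_apply, Pi.smul_apply, smul_eq_mul, hb]
      rw [add_sub_cancel_right]
      exact Finset.sum_congr rfl fun k _ => by ring
    rw [hΔ, fwdDiff_iter_finset_sum]
    funext y
    rw [Finset.sum_apply]
    refine Finset.sum_eq_zero fun k hk => ?_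
    have hkn := Finset.mem_range.mp hk
    rw [fwdDiff_iter_const_smul, ih k hkn (by omega : k < M)]
    simp

lemma alt_sum_choose_pow_eq_zero {A : Type*} [CommRing A] (c : A) {n N : ℕ} (h : n < N) :
    ∑ i ∈ range (N + 1), (-1 : A) ^ i * (N.choose i : A) * (c + i) ^ n = 0 := by
  have h0 := fwdDiff_iter_eq_sum_shift (h := (1:A)) (fun y : A => y ^ n) N c
  rw [fwdDiff_iter_pow_eq_zero h] at h0
  have h1 : ∑ k ∈ range (N + 1), ((-1 : ℤ) ^ (N - k) * (N.choose k : ℤ)) • (c + k • (1:A)) ^ n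
      = 0 := h0.symm
  have h2 := congrArg (fun t => (-1 : A) ^ N * t) h1
  simp only [Finset.mul_sum, mul_zero] at h2
  rw [← h2]
  refine (Finset.sum_congr rfl fun i hi => ?_)
  have hiN : i ≤ N := by have := Finset.mem_range.mp hi; omega
  have hsgn : (-1 : A) ^ N * (-1 : A) ^ (N - i) = (-1 : A) ^ i := by
    rw [← pow_add, show N + (N - i) = 2 * (N - i) + i by omega, pow_add, pow_mul]
    simp
  rw [zsmul_eq_mul, nsmul_eq_mul, mul_one]
  push_cast
  rw [← hsgn]
  ring

lemma telescope_alt (n : ℕ) (x : ℝ) :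
    ∀ i : ℕ, ∑ j ∈ range i, (-1 : ℝ)^j * (((j : ℝ) + x)^n + ((j : ℝ) + 1 + x)^n)
      = x ^ n - (-1 : ℝ)^i * ((i : ℝ) + x)^n := by
  intro i
  induction i with
  | zero => simp
  | succ i ih =>
    rw [Finset.sum_range_succ, ih]
    push_cast
    ring

noncomputable def Rnum (n : ℕ) (x : ℝ) : ℝ :=
  ∑ i ∈ range (n + 3), ((n+2).choose i : ℝ) * ∑ j ∈ range i, (-1:ℝ)^j * ((j : ℝ) + x)^n

lemma Rnum_fe (n : ℕ) (x : ℝ) : Rnum n x + Rnum n (x + 1) = 2 ^ (n+2) * x ^ n := by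
  unfold Rnum
  rw [← Finset.sum_add_distrib]
  have key : ∀ i ∈ range (n + 3), ((n+2).choose i : ℝ) * ∑ j ∈ range i, (-1:ℝ)^j * ((j : ℝ) + x)^n
      + ((n+2).choose i : ℝ) * ∑ j ∈ range i, (-1:ℝ)^j * ((j : ℝ) + (x+1))^n
      = ((n+2).choose i : ℝ) * (x ^ n - (-1:ℝ)^i * ((i:ℝ) + x)^n) := by
    intro i _
    rw [← mul_add, ← Finset.sum_add_distrib, ← telescope_alt n x i]
    congr 1
    exact Finset.sum_congr rfl fun j _ => by ring_nf
  rw [Finset.sum_congr rfl key]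
  have h1 : ∑ i ∈ range (n + 3), ((n+2).choose i : ℝ) * (x ^ n - (-1:ℝ)^i * ((i:ℝ) + x)^n)
      = (∑ i ∈ range (n + 3), ((n+2).choose i : ℝ)) * x ^ n
        - ∑ i ∈ range (n + 3), (-1:ℝ)^i * ((n+2).choose i : ℝ) * (x + (i:ℝ))^n := by
    rw [Finset.sum_mul, ← Finset.sum_sub_distrib]
    exact Finset.sum_congr rfl fun i _ => by ring
  rw [h1, alt_sum_choose_pow_eq_zero x (by omega : n < n + 2), sub_zero]
  have h2 : ∑ i ∈ range (n + 3), ((n+2).choose i : ℝ) = 2 ^ (n + 2) := by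
    have := Nat.sum_range_choose (n + 2)
    have := congrArg (fun t : ℕ => (t : ℝ)) this
    push_cast at this
    exact this
  rw [h2]

lemma Rnum_isPoly (n : ℕ) : ∃ P : Polynomial ℝ, ∀ x, Rnum n x = P.eval x := by
  refine ⟨∑ i ∈ range (n + 3), Polynomial.C ((n+2).choose i : ℝ) *
    ∑ j ∈ range i, Polynomial.C ((-1:ℝ)^j) * (Polynomial.C (j : ℝ) + Polynomial.X)^n,
    fun x => ?_⟩
  unfold Rnum
  rw [Polynomial.eval_finset_sum]
  refine Finset.sum_congr rfl fun i _ => ?_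
  rw [Polynomial.eval_mul, Polynomial.eval_C, Polynomial.eval_finset_sum]
  congr 1
  refine Finset.sum_congr rfl fun j _ => ?_
  simp

lemma vanish_of_poly_fe (f : ℝ → ℝ) (hf : ∃ P : Polynomial ℝ, ∀ x, f x = P.eval x)
    (hfe : ∀ x, f x + f (x + 1) = 0) : ∀ x, f x = 0 := by
  obtain ⟨P, hP⟩ := hf
  have h2 : ∀ x : ℝ, P.eval (x + 2) = P.eval x := by
    intro x
    have a := hfe x
    have b := hfe (x + 1)
    rw [hP, hP] at a b
    rw [show x + 1 + 1 = x + 2 by ring] at b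
    linarith
  have hk : ∀ k : ℕ, P.eval (2 * (k:ℝ)) = P.eval 0 := by
    intro k
    induction k with
    | zero => norm_num
    | succ k ih => push_cast; rw [show 2*((k:ℝ)+1) = 2*(k:ℝ) + 2 by ring, h2]; push_cast at ih; exact ih
  have hQ : P - Polynomial.C (P.eval 0) = 0 := by
    refine Polynomial.eq_zero_of_infinite_isRoot _ ?_
    apply Set.Infinite.mono (s := Set.range (fun k : ℕ => 2 * (k:ℝ)))
    · rintro y ⟨k, rfl⟩
      simp only [Set.mem_setOf_eq, Polynomial.IsRoot, Polynomial.eval_sub, Polynomial.eval_C, hk k,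
        sub_self]
    · apply Set.infinite_range_of_injective
      intro a b hab
      field_simp at hab
      exact_mod_cast hab
  have hconst : ∀ x : ℝ, P.eval x = P.eval 0 := by
    intro x
    have := congrArg (Polynomial.eval x) hQ
    simpa [sub_eq_zero] using this
  have h0 : P.eval 0 = 0 := by
    have := hfe 0
    rw [hP, hP, show (0:ℝ) + 1 = 1 by norm_num, hconst 1] at this
    linarith
  intro x
  rw [hP, hconst, h0]

lemma eulerPoly_eq_Rnum (n : ℕ) (x : ℝ) : eulerPoly n x = 2 * Rnum n x / 2 ^ (n + 2) := by
  have hfe : ∀ y : ℝ, (fun t => eulerPoly n t - 2 * Rnum n t / 2 ^ (n + 2)) y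
      + (fun t => eulerPoly n t - 2 * Rnum n t / 2 ^ (n + 2)) (y + 1) = 0 := by
    intro y
    simp only
    have a := eulerPoly_fe n y
    have b := Rnum_fe n y
    have h2 : (2:ℝ) ^ (n+2) ≠ 0 := by positivity
    field_simp
    linear_combination (2:ℝ)^(n+2) * a - 2 * b
  have hpoly : ∃ P : Polynomial ℝ, ∀ y, eulerPoly n y - 2 * Rnum n y / 2 ^ (n + 2) = P.eval y := by
    obtain ⟨P1, h1⟩ := eulerPoly_isPoly n
    obtain ⟨P2, h2⟩ := Rnum_isPoly n
    exact ⟨P1 - Polynomial.C (2 / 2 ^ (n+2)) * P2, fun y => by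
      simp [h1, h2]; ring⟩
  have := vanish_of_poly_fe _ hpoly hfe x
  linarith

section ana
variable {q : ℝ} (hq : 0 < q)

/-- N-th alternating binomial difference of `x ↦ (x+q)^(-s)`. -/
noncomputable def dd (q : ℝ) (N : ℕ) (s : ℂ) (x : ℝ) : ℂ :=
  ∑ i ∈ range (N + 1), (-1:ℂ)^i * (N.choose i : ℂ) * (((x + i + q : ℝ) : ℂ)) ^ (-s)

lemma dd_eq_fwdDiff (N : ℕ) (s : ℂ) (x : ℝ) :
    dd q N s x = (-1:ℂ)^N *
      ((fwdDiff (1:ℝ))^[N] (fun y : ℝ => (((y + q : ℝ) : ℂ)) ^ (-s)) x) := by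
  rw [fwdDiff_iter_eq_sum_shift, Finset.mul_sum, dd]
  refine Finset.sum_congr rfl fun i hi => ?_
  have hiN : i ≤ N := by have := Finset.mem_range.mp hi; omega
  have hsgn : (-1 : ℂ) ^ N * (-1 : ℂ) ^ (N - i) = (-1 : ℂ) ^ i := by
    rw [← pow_add, show N + (N - i) = 2 * (N - i) + i by omega, pow_add, pow_mul]
    simp
  rw [zsmul_eq_mul, nsmul_eq_mul, mul_one]
  rw [show x + (i:ℝ) + q = (x + (i:ℝ)) + q by ring]
  push_cast
  rw [← hsgn]
  ring

lemma dd_rec (N : ℕ) (s : ℂ) (x : ℝ) :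
    dd q (N+1) s x = dd q N s x - dd q N s (x+1) := by
  rw [dd_eq_fwdDiff, dd_eq_fwdDiff, dd_eq_fwdDiff,
    Function.iterate_succ_apply', fwdDiff]
  push_cast
  ring

lemma dd_hasDerivAt (hq : 0 < q) (N : ℕ) (s : ℂ) {x : ℝ} (hx : 0 ≤ x) :
    HasDerivAt (fun y : ℝ => dd q N s y) (-s * dd q N (s+1) x) x := by
  have key : ∀ i ∈ range (N + 1), HasDerivAt
      (fun y : ℝ => (-1:ℂ)^i * (N.choose i : ℂ) * (((y + i + q : ℝ) : ℂ)) ^ (-s))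
      ((-1:ℂ)^i * (N.choose i : ℂ) * (-s * (((x + i + q : ℝ) : ℂ)) ^ (-(s+1)))) x := by
    intro i _
    have hpos : (0:ℝ) < x + i + q := by positivity
    have hmem : (((x + (i:ℝ) + q : ℝ)) : ℂ) ∈ Complex.slitPlane := by
      rw [Complex.mem_slitPlane_iff]
      exact Or.inl (by simpa using hpos)
    have h1 := (hasDerivAt_id (((x + (i:ℝ) + q : ℝ)) : ℂ)).cpow_const (c := -s) hmem
    rw [mul_one, id_eq] at h1
    have h2 := h1.comp_ofReal
    have h3 : HasDerivAt (fun y : ℝ => y + (i:ℝ) + q) 1 x := by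
      simpa using ((hasDerivAt_id x).add_const ((i:ℝ))).add_const q
    have h4 := h2.scomp x h3
    simp only [one_smul] at h4
    have h5 : HasDerivAt (fun y : ℝ => (((y + i + q : ℝ)) : ℂ) ^ (-s))
        ((-s) * ((x + i + q : ℝ) : ℂ) ^ (-s - 1)) x := by
      exact h4
    have := h5.const_mul ((-1:ℂ)^i * (N.choose i : ℂ))
    rw [show -(s+1) = -s - 1 by ring]
    exact this
  have := HasDerivAt.fun_sum key
  refine this.congr_deriv ?_
  symm
  rw [dd, Finset.mul_sum]
  exact Finset.sum_congr rfl fun i _ => by ring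

lemma dd_norm_le (hq : 0 < q) :
    ∀ (N : ℕ) (s : ℂ), 0 ≤ s.re + N → ∀ x : ℝ, 0 ≤ x →
      ‖dd q N s x‖ ≤ (∏ i ∈ range N, (‖s‖ + i)) * (x + q) ^ (-(s.re + N)) := by
  intro N
  induction N with
  | zero =>
    intro s _ x hx
    have hpos : (0:ℝ) < x + q := by positivity
    rw [dd]
    simp only [zero_add, range_one, Finset.sum_singleton, pow_zero, Nat.choose_self,
      Nat.cast_one, one_mul, Nat.cast_zero, add_zero, prod_range_zero, Nat.cast_ofNat,
      CharP.cast_eq_zero]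
    rw [Complex.norm_cpow_eq_rpow_re_of_pos hpos]
    simp [Complex.neg_re]
  | succ N ih =>
    intro s hs x hx
    have hpos : (0:ℝ) < x + q := by positivity
    have hre : 0 ≤ (s+1).re + N := by
      simp only [Complex.add_re, Complex.one_re]
      push_cast at hs ⊢; linarith
    -- MVT on [x, x+1]
    set C : ℝ := ‖s‖ * ((∏ i ∈ range N, (‖s‖ + 1 + i)) * (x + q) ^ (-(s.re + (N+1)))) with hC
    have hbound : ∀ y ∈ Set.Ico x (x+1), ‖-s * dd q N (s+1) y‖ ≤ C := by
      intro y hy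
      have hy0 : 0 ≤ y := le_trans hx hy.1
      have hyq : (0:ℝ) < y + q := by positivity
      rw [norm_mul, norm_neg]
      have h1 := ih (s+1) hre y hy0
      have h2 : (∏ i ∈ range N, (‖s+1‖ + i)) ≤ ∏ i ∈ range N, (‖s‖ + 1 + i) := by
        refine Finset.prod_le_prod (fun i _ => by positivity) (fun i _ => ?_)
        have := norm_add_le s (1:ℂ)
        simp only [norm_one] at this
        linarith
      have h3 : (y + q) ^ (-((s+1).re + N)) ≤ (x + q) ^ (-(s.re + (N+1))) := by
        have he : -((s+1).re + (N:ℝ)) = -(s.re + ((N:ℝ)+1)) := by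
          simp [Complex.add_re, Complex.one_re]; ring
        rw [he]
        have hexp : (0:ℝ) ≤ s.re + ((N:ℝ)+1) := by push_cast at hs; linarith
        rw [Real.rpow_neg hpos.le, Real.rpow_neg hyq.le]
        have := Real.rpow_le_rpow hpos.le (by linarith [hy.1] : x + q ≤ y + q) hexp
        exact inv_anti₀ (Real.rpow_pos_of_pos hpos _) this
      calc ‖s‖ * ‖dd q N (s+1) y‖
          ≤ ‖s‖ * ((∏ i ∈ range N, (‖s+1‖ + i)) * (y + q) ^ (-((s+1).re + N))) := by
            refine mul_le_mul_of_nonneg_left h1 (norm_nonneg s)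
        _ ≤ C := by
            rw [hC]
            refine mul_le_mul_of_nonneg_left ?_ (norm_nonneg s)
            have hp1 : (0:ℝ) ≤ (y + q) ^ (-((s+1).re + N)) := Real.rpow_nonneg hyq.le _
            have hp2 : (0:ℝ) ≤ ∏ i ∈ range N, (‖s‖ + 1 + i) := by positivity
            calc (∏ i ∈ range N, (‖s+1‖ + i)) * (y + q) ^ (-((s+1).re + N))
                ≤ (∏ i ∈ range N, (‖s‖ + 1 + i)) * (y + q) ^ (-((s+1).re + N)) :=
                  mul_le_mul_of_nonneg_right h2 hp1
              _ ≤ (∏ i ∈ range N, (‖s‖ + 1 + i)) * (x + q) ^ (-(s.re + (N+1))) := by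
                  push_cast
                  push_cast at h3
                  exact mul_le_mul_of_nonneg_left h3 hp2
    have hderiv : ∀ y ∈ Set.Icc x (x+1),
        HasDerivWithinAt (fun y : ℝ => dd q N s y) (-s * dd q N (s+1) y) (Set.Icc x (x+1)) y :=
      fun y hy => (dd_hasDerivAt hq N s (le_trans hx hy.1)).hasDerivWithinAt
    have hmvt := norm_image_sub_le_of_norm_deriv_le_segment' hderiv hbound (x+1)
      (Set.right_mem_Icc.mpr (by linarith))
    rw [add_sub_cancel_left, mul_one] at hmvt
    have hrec : dd q (N+1) s x = -(dd q N s (x+1) - dd q N s x) := by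
      rw [dd_rec]; ring
    rw [hrec, norm_neg]
    refine le_trans hmvt ?_
    rw [Finset.prod_range_succ']
    have heq : (∏ i ∈ range N, (‖s‖ + ((i:ℝ)+1))) * (‖s‖ + (0:ℕ)) 
        = ‖s‖ * ∏ i ∈ range N, (‖s‖ + 1 + i) := by
      push_cast
      rw [add_zero, mul_comm]
      congr 1
      exact Finset.prod_congr rfl fun i _ => by ring
    push_cast
    push_cast at heq
    rw [heq]
    rw [hC]
    push_cast
    rw [mul_assoc]


lemma norm_term {r : ℝ} (hr : 0 < r) (s : ℂ) : ‖((r:ℝ):ℂ)^(-s)‖ = r ^ (-s.re) := by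
  rw [Complex.norm_cpow_eq_rpow_re_of_pos hr, Complex.neg_re]

lemma summable_rpow_shift (hq : 0 < q) {a : ℝ} (ha : 1 < a) :
    Summable (fun k : ℕ => ((k:ℝ) + q) ^ (-a)) := by
  refine ((Real.summable_one_div_nat_add_rpow q a).mpr ha).congr fun k => ?_
  rw [abs_of_pos (show (0:ℝ) < (k:ℝ)+q by positivity), one_div,
    ← Real.rpow_neg (by positivity)]

lemma summable_u (hq : 0 < q) {s : ℂ} (hs : 1 < s.re) :
    Summable (fun k : ℕ => (-1:ℂ)^k * ((((k:ℝ) + q : ℝ)):ℂ)^(-s)) := by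
  apply Summable.of_norm
  refine Summable.congr (summable_rpow_shift hq hs) fun k => ?_
  rw [norm_mul, norm_pow, norm_neg, norm_one, one_pow, one_mul,
    norm_term (by positivity) s]

lemma summable_dd (hq : 0 < q) (N : ℕ) {s : ℂ} (hs : 1 < s.re + N) :
    Summable (fun k : ℕ => (-1:ℂ)^k * dd q N s (k:ℝ)) := by
  apply Summable.of_norm
  have hb : ∀ k : ℕ, ‖(-1:ℂ)^k * dd q N s (k:ℝ)‖
      ≤ (∏ i ∈ range N, (‖s‖ + i)) * (((k:ℝ) + q) ^ (-(s.re + N))) := by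
    intro k
    rw [norm_mul, norm_pow, norm_neg, norm_one, one_pow, one_mul]
    exact dd_norm_le hq N s (by linarith) k (Nat.cast_nonneg k)
  exact Summable.of_nonneg_of_le (fun k => norm_nonneg _) hb
    ((summable_rpow_shift hq hs).mul_left _)

lemma tsum_dd_eq (hq : 0 < q) (N : ℕ) {s : ℂ} (hs : 1 < s.re) :
    (∑' k : ℕ, (-1:ℂ)^k * dd q N s (k:ℝ))
      = 2^N * (∑' k : ℕ, (-1:ℂ)^k * ((((k:ℝ) + q : ℝ)):ℂ)^(-s))
        - ∑ i ∈ range (N+1), (N.choose i : ℂ) *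
            ∑ j ∈ range i, (-1:ℂ)^j * ((((j:ℝ) + q : ℝ)):ℂ)^(-s) := by
  set u : ℕ → ℂ := fun k => (-1:ℂ)^k * ((((k:ℝ) + q : ℝ)):ℂ)^(-s) with hu
  have hsummu : Summable u := summable_u hq hs
  set g : ℕ → ℕ → ℂ :=
    fun i k => (N.choose i : ℂ) * u (k + i) with hg
  have hterm : ∀ k : ℕ, (-1:ℂ)^k * dd q N s (k:ℝ) = ∑ i ∈ range (N+1), g i k := by
    intro k
    rw [dd, Finset.mul_sum]
    refine Finset.sum_congr rfl fun i _ => ?_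
    rw [hg]
    simp only [hu]
    have hcast : (((k:ℝ) + (i:ℝ) + q : ℝ) : ℂ) = ((((k+i:ℕ):ℝ) + q : ℝ) : ℂ) := by
      push_cast; ring_nf
    rw [hcast, pow_add]
    ring
  have hgsum : ∀ i, Summable (g i ·) := by
    intro i
    exact ((summable_nat_add_iff i).mpr hsummu).mul_left _
  calc (∑' k : ℕ, (-1:ℂ)^k * dd q N s (k:ℝ))
      = ∑' k : ℕ, ∑ i ∈ range (N+1), g i k := by
        exact tsum_congr hterm
    _ = ∑ i ∈ range (N+1), ∑' k : ℕ, g i k := Summable.tsum_finsetSum (fun i _ => hgsum i)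
    _ = ∑ i ∈ range (N+1), (N.choose i : ℂ) * ((∑' k, u k) - ∑ j ∈ range i, u j) := by
        refine Finset.sum_congr rfl fun i _ => ?_
        rw [hg]
        simp only
        rw [tsum_mul_left]
        congr 1
        have := Summable.sum_add_tsum_nat_add (f := u) i hsummu
        have h2 : (∑' k, u (k + i)) = (∑' k, u k) - ∑ j ∈ range i, u j := by
          rw [← this]; ring
        exact h2
    _ = 2^N * (∑' k, u k) - ∑ i ∈ range (N+1), (N.choose i : ℂ) * ∑ j ∈ range i, u j := by
        have hchoose : ∑ i ∈ range (N+1), (N.choose i : ℂ) = 2^N := by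
          have := Nat.sum_range_choose N
          exact_mod_cast congrArg (Nat.cast : ℕ → ℂ) this
        simp_rw [mul_sub]
        rw [Finset.sum_sub_distrib, ← Finset.sum_mul, hchoose]


lemma dd_neg_nat (hq : 0 < q) {n N : ℕ} (h : n < N) (x : ℝ) :
    dd q N (-(n:ℂ)) x = 0 := by
  rw [dd]
  have hc : ∀ i ∈ range (N+1), (-1:ℂ)^i * (N.choose i:ℂ) * (((x + i + q:ℝ)):ℂ)^(-(-(n:ℂ)))
      = (-1:ℂ)^i * (N.choose i:ℂ) * (((x+q:ℝ):ℂ) + (i:ℂ))^n := by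
    intro i _
    rw [neg_neg, Complex.cpow_natCast]
    congr 2
    push_cast
    ring
  rw [Finset.sum_congr rfl hc]
  exact alt_sum_choose_pow_eq_zero (((x+q:ℝ)):ℂ) h

lemma dd_diff_s (N : ℕ) (x : ℝ) (hpos : 0 < x + q) :
    Differentiable ℂ (fun s => dd q N s x) := by
  have : (fun s => dd q N s x) = fun s => ∑ i ∈ range (N+1),
      (-1:ℂ)^i * (N.choose i : ℂ) * (((x + i + q : ℝ) : ℂ)) ^ (-s) := by
    funext s; rw [dd]
  rw [this]
  refine Differentiable.fun_sum fun i _ => ?_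
  have hb : (((x + (i:ℝ) + q : ℝ)) : ℂ) ≠ 0 := by
    simp only [ne_eq, Complex.ofReal_eq_zero]
    have hi : (0:ℝ) ≤ (i:ℝ) := Nat.cast_nonneg i
    intro hcon
    linarith
  exact ((differentiable_id.neg).const_cpow (Or.inl hb)).const_mul _

end ana

theorem zetaE_neg_nat (q : ℝ) (hq : 0 < q) (F : ℂ → ℂ) (hF : Differentiable ℂ F)
    (hagree : ∀ z : ℂ, 1 < z.re → F z = ∑' k : ℕ, (-1 : ℂ) ^ k / ((k : ℂ) + (q : ℂ)) ^ z) :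
    (∀ n : ℕ, F (-(n : ℂ)) = ((eulerPoly n q : ℝ) : ℂ) / 2) ∧ F 0 = 1/2 := by
  have key : ∀ n : ℕ, F (-(n : ℂ)) = ((eulerPoly n q : ℝ) : ℂ) / 2 := by
    intro n
    set N : ℕ := n + 2 with hNdef
    set Gfin : ℂ → ℂ := fun s => ∑ i ∈ range (N+1), (N.choose i:ℂ) *
      ∑ j ∈ range i, (-1:ℂ)^j * ((((j:ℝ)+q:ℝ)):ℂ)^(-s) with hGfin
    set Gser : ℂ → ℂ := fun s => ∑' k : ℕ, (-1:ℂ)^k * dd q N s (k:ℝ) with hGser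
    set G : ℂ → ℂ := fun s => (Gser s + Gfin s) / 2^N with hG
    set U : Set ℂ := {z | 1 - (N:ℝ) < z.re} with hU
    have hUopen : IsOpen U := isOpen_lt continuous_const Complex.continuous_re
    have hUconn : IsPreconnected U := (convex_halfSpace_re_gt _).isPreconnected
    -- differentiability of Gser on U
    have hGser_diff : DifferentiableOn ℂ Gser U := by
      intro s₀ hs₀
      refine DifferentiableAt.differentiableWithinAt ?_
      have hs₀' : 1 - (N:ℝ) < s₀.re := hs₀
      set δ : ℝ := (s₀.re - (1 - (N:ℝ)))/2 with hδdef
      have hδ : 0 < δ := by rw [hδdef]; linarith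
      set R : ℝ := ‖s₀‖ + 1 with hRdef
      set V : Set ℂ := {z : ℂ | 1 - (N:ℝ) + δ < z.re} ∩ Metric.ball 0 R with hV
      have hVopen : IsOpen V :=
        (isOpen_lt continuous_const Complex.continuous_re).inter Metric.isOpen_ball
      have hs₀V : s₀ ∈ V := by
        constructor
        · show 1 - (N:ℝ) + δ < s₀.re
          rw [hδdef]; linarith
        · rw [mem_ball_zero_iff, hRdef]; linarith
      set Cq : ℝ := max 1 (q ^ ((1+δ) - (R+(N:ℝ)))) with hCq
      set P : ℝ := ∏ i ∈ range N, (R + (i:ℝ)) with hP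
      have hPnonneg : 0 ≤ P := by
        rw [hP]
        refine Finset.prod_nonneg fun i _ => ?_
        have : (0:ℝ) ≤ ‖s₀‖ := norm_nonneg _
        rw [hRdef]
        positivity
      have husum : Summable (fun k:ℕ => P * Cq * (((k:ℝ)+q) ^ (-(1+δ)))) :=
        (summable_rpow_shift hq (by linarith)).mul_left _
      have hbound : ∀ (k : ℕ) (z : ℂ), z ∈ V →
          ‖(-1:ℂ)^k * dd q N z (k:ℝ)‖ ≤ P * Cq * (((k:ℝ)+q) ^ (-(1+δ))) := by
        intro k z hz
        obtain ⟨hz1, hz2⟩ := hz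
        have hz1' : 1 - (N:ℝ) + δ < z.re := hz1
        have hz2' : ‖z‖ < R := mem_ball_zero_iff.mp hz2
        rw [norm_mul, norm_pow, norm_neg, norm_one, one_pow, one_mul]
        have h1 := dd_norm_le hq N z (by linarith) k (Nat.cast_nonneg k)
        have h2 : (∏ i ∈ range N, (‖z‖ + (i:ℝ))) ≤ P := by
          rw [hP]
          exact Finset.prod_le_prod (fun i _ => by positivity)
            (fun i _ => by linarith)
        set y : ℝ := (k:ℝ) + q with hy
        have hy0 : 0 < y := by rw [hy]; positivity
        have hba : (1+δ) ≤ z.re + N := by linarith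
        have haA : z.re + (N:ℝ) ≤ R + N := by
          have := Complex.abs_re_le_norm z
          have : z.re ≤ ‖z‖ := le_trans (le_abs_self _) this
          linarith
        have h3 : y ^ (-(z.re + (N:ℝ))) ≤ Cq * y ^ (-(1+δ)) := by
          rcases le_or_gt 1 y with hy1 | hy1
          · have step : y ^ (-(z.re + (N:ℝ))) ≤ y ^ (-(1+δ)) :=
              Real.rpow_le_rpow_of_exponent_le hy1 (by linarith)
            have : (1:ℝ) * y ^ (-(1+δ)) ≤ Cq * y ^ (-(1+δ)) :=
              mul_le_mul_of_nonneg_right (le_max_left _ _) (Real.rpow_nonneg hy0.le _)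
            rw [one_mul] at this
            linarith
          · have hk0 : k = 0 := by
              by_contra hk
              have h1k : (1:ℝ) ≤ (k:ℝ) := Nat.one_le_cast.mpr (Nat.one_le_iff_ne_zero.mpr hk)
              rw [hy] at hy1
              linarith
            have hyq : y = q := by rw [hy, hk0]; simp
            have hsplit : y ^ (-(z.re + (N:ℝ))) = y^(-(1+δ)) * y^((1+δ) - (z.re + N)) := by
              rw [← Real.rpow_add hy0]
              congr 1
              ring
            have hstep : y^((1+δ) - (z.re + (N:ℝ))) ≤ y^((1+δ) - (R + (N:ℝ))) :=
              Real.rpow_le_rpow_of_exponent_ge hy0 hy1.le (by linarith)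
            have hstep2 : y^((1+δ) - (R + (N:ℝ))) ≤ Cq := by
              rw [hyq, hCq]
              exact le_max_right _ _
            calc y ^ (-(z.re + (N:ℝ))) = y^(-(1+δ)) * y^((1+δ) - (z.re + N)) := hsplit
              _ ≤ y^(-(1+δ)) * Cq :=
                  mul_le_mul_of_nonneg_left (le_trans hstep hstep2) (Real.rpow_nonneg hy0.le _)
              _ = Cq * y^(-(1+δ)) := by ring
        calc ‖dd q N z (k:ℝ)‖
            ≤ (∏ i ∈ range N, (‖z‖ + (i:ℝ))) * y ^ (-(z.re + N)) := h1
          _ ≤ P * (Cq * y ^ (-(1+δ))) := by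
              refine mul_le_mul h2 h3 (Real.rpow_nonneg hy0.le _) hPnonneg
          _ = P * Cq * (y ^ (-(1+δ))) := by ring
      have hdiffterms : ∀ k : ℕ, DifferentiableOn ℂ
          (fun s => (-1:ℂ)^k * dd q N s (k:ℝ)) V := by
        intro k
        have : (0:ℝ) < (k:ℝ) + q := by positivity
        exact ((dd_diff_s N (k:ℝ) this).const_mul _).differentiableOn
      have hDV := differentiableOn_tsum_of_summable_norm husum hdiffterms hVopen hbound
      exact (hDV.differentiableAt (hVopen.mem_nhds hs₀V))
    have hGfin_diff : Differentiable ℂ Gfin := by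
      rw [hGfin]
      refine Differentiable.fun_sum fun i _ => Differentiable.const_mul ?_ _
      refine Differentiable.fun_sum fun j _ => Differentiable.const_mul ?_ _
      have hb : ((((j:ℝ)+q:ℝ)):ℂ) ≠ 0 := by
        simp only [ne_eq, Complex.ofReal_eq_zero]
        positivity
      exact (differentiable_id.neg).const_cpow (Or.inl hb)
    have hGdiff : DifferentiableOn ℂ G U :=
      (hGser_diff.add hGfin_diff.differentiableOn).div_const _
    -- G equals the series for 1 < re
    have hGeq : ∀ z : ℂ, 1 < z.re → G z = ∑' k : ℕ, (-1 : ℂ) ^ k / ((k : ℂ) + (q : ℂ)) ^ z := by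
      intro z hz
      have h1 := tsum_dd_eq hq N hz
      have h2pow : (2:ℂ)^N ≠ 0 := pow_ne_zero _ two_ne_zero
      have hGz : G z = ∑' k : ℕ, (-1:ℂ)^k * ((((k:ℝ) + q : ℝ)):ℂ)^(-z) := by
        rw [hG]
        simp only
        rw [hGser]
        simp only
        rw [h1, hGfin]
        simp only
        field_simp
        ring
      rw [hGz]
      refine tsum_congr fun k => ?_
      rw [Complex.cpow_neg]
      push_cast
      rw [div_eq_mul_inv]
    -- identity theorem
    have hFa : AnalyticOnNhd ℂ F U := hF.differentiableOn.analyticOnNhd hUopen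
    have hGa : AnalyticOnNhd ℂ G U := hGdiff.analyticOnNhd hUopen
    have hN0 : (0:ℝ) ≤ (N:ℝ) := Nat.cast_nonneg N
    have h2U : (2:ℂ) ∈ U := by
      show 1 - (N:ℝ) < (2:ℂ).re
      simp only [Complex.re_ofNat]
      linarith
    have hev : F =ᶠ[nhds 2] G := by
      have hopen1 : IsOpen {z : ℂ | 1 < z.re} := isOpen_lt continuous_const Complex.continuous_re
      refine Filter.eventuallyEq_of_mem (hopen1.mem_nhds ?_) fun z hz => ?_
      · show 1 < (2:ℂ).re
        simp only [Complex.re_ofNat]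
        norm_num
      · rw [hagree z hz, hGeq z hz]
    have hEq := hFa.eqOn_of_preconnected_of_eventuallyEq hGa hUconn h2U hev
    have hmem : -(n:ℂ) ∈ U := by
      show 1 - (N:ℝ) < (-(n:ℂ)).re
      simp only [Complex.neg_re, Complex.natCast_re]
      rw [hNdef]
      push_cast
      linarith
    rw [hEq hmem]
    -- evaluation at -n
    have hser0 : Gser (-(n:ℂ)) = 0 := by
      rw [hGser]
      simp only
      have hz : ∀ k : ℕ, (-1:ℂ)^k * dd q N (-(n:ℂ)) ((k:ℕ):ℝ) = 0 := by
        intro k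
        rw [dd_neg_nat hq (by omega : n < N), mul_zero]
      rw [tsum_congr hz, tsum_zero]
    have hfinval : Gfin (-(n:ℂ)) = ((Rnum n q : ℝ) : ℂ) := by
      rw [hGfin, Rnum]
      simp only
      push_cast
      refine Finset.sum_congr rfl fun i _ => ?_
      congr 1
      refine Finset.sum_congr rfl fun j _ => ?_
      rw [neg_neg, Complex.cpow_natCast]
    have h2pow : (2:ℂ)^N ≠ 0 := pow_ne_zero _ two_ne_zero
    rw [hG]
    simp only
    rw [hser0, hfinval, zero_add, eulerPoly_eq_Rnum]
    rw [hNdef]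
    push_cast
    have h2powR : (2:ℝ)^(n+2) ≠ 0 := by positivity
    field_simp
  refine ⟨key, ?_⟩
  have h0 := key 0
  simp only [Nat.cast_zero, neg_zero, eulerPoly_zero] at h0
  rw [h0]
  norm_num
end

section
/- Let g(t) = -(q+t)^{-z} log(q+t) for fixed complex z and real q > 0. Then for every integer k ≥ 2, g^{(k)}(0) = (-1)^k k! Σ_{j=0}^{k-1} (z)_j/(j!(k-j)) · q^{-z-k} + (-1)^{k+1} (z)_k q^{-z-k} log q. -/
open Finset

lemma sum_step (z : ℂ) (k : ℕ) :
    (((k+1).factorial : ℂ)) * ∑ j ∈ range (k+1),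
        (∏ i ∈ range j, (z + (i:ℂ))) / ((j.factorial : ℂ) * (((k:ℂ)+1) - (j:ℂ)))
      = (z + (k:ℂ)) * ((k.factorial : ℂ) * ∑ j ∈ range k,
        (∏ i ∈ range j, (z + (i:ℂ))) / ((j.factorial : ℂ) * ((k:ℂ) - (j:ℂ))))
        + ∏ i ∈ range k, (z + (i:ℂ)) := by
  set P : ℕ → ℂ := fun j => ∏ i ∈ range j, (z + (i:ℂ)) with hP
  rw [Finset.sum_range_succ' _ k]
  rw [mul_add, Finset.mul_sum, Finset.mul_sum, Finset.mul_sum]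
  have key : ∀ j ∈ range k,
      ((k+1).factorial : ℂ) * (P (j+1) / (((j+1).factorial : ℂ) * (((k:ℂ)+1) - ((j+1:ℕ):ℂ))))
      = (z + (k:ℂ)) * ((k.factorial:ℂ) * (P j / ((j.factorial:ℂ) * ((k:ℂ) - (j:ℂ)))))
        + ((k.factorial:ℂ) * (P (j+1) / ((j+1).factorial : ℂ))
           - (k.factorial:ℂ) * (P j / (j.factorial : ℂ))) := by
    intro j hj
    rw [Finset.mem_range] at hj
    have hc : ((k:ℂ) - (j:ℂ)) ≠ 0 := by
      have : ((k:ℂ) - (j:ℂ)) = ((k - j : ℕ) : ℂ) := by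
        push_cast [Nat.cast_sub hj.le]; ring
      rw [this]
      exact_mod_cast Nat.sub_ne_zero_of_lt hj
    have hjf : ((j.factorial : ℂ)) ≠ 0 := Nat.cast_ne_zero.mpr j.factorial_ne_zero
    have hj1 : ((j:ℂ) + 1) ≠ 0 := by
      have : ((j:ℂ) + 1) = ((j+1 : ℕ) : ℂ) := by push_cast; ring
      rw [this]; exact Nat.cast_ne_zero.mpr (Nat.succ_ne_zero j)
    have hPs : P (j+1) = P j * (z + (j:ℂ)) := Finset.prod_range_succ _ _
    have hf1 : (((j+1).factorial : ℂ)) = ((j:ℂ)+1) * (j.factorial : ℂ) := by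
      push_cast [Nat.factorial_succ]; ring
    have hf2 : (((k+1).factorial : ℂ)) = ((k:ℂ)+1) * (k.factorial : ℂ) := by
      push_cast [Nat.factorial_succ]; ring
    rw [hPs, hf1, hf2]
    have : ((k:ℂ)+1) - ((j+1:ℕ):ℂ) = (k:ℂ) - (j:ℂ) := by push_cast; ring
    rw [this]
    field_simp
    ring
  rw [Finset.sum_congr rfl key, Finset.sum_add_distrib, Finset.sum_sub_distrib]
  have htel : ∑ j ∈ range k, (k.factorial:ℂ) * (P (j+1) / ((j+1).factorial : ℂ))
      - ∑ j ∈ range k, (k.factorial:ℂ) * (P j / (j.factorial : ℂ))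
      = P k - (k.factorial:ℂ) := by
    have := Finset.sum_range_sub (f := fun j => (k.factorial:ℂ) * (P j / (j.factorial : ℂ))) k
    rw [← Finset.sum_sub_distrib] at *
    calc _ = (k.factorial:ℂ) * (P k / (k.factorial : ℂ)) - (k.factorial:ℂ) * (P 0 / (Nat.factorial 0 : ℂ)) := this
    _ = P k - (k.factorial:ℂ) := by
        simp [hP, Nat.factorial]
        rw [mul_div_cancel₀ _ (Nat.cast_ne_zero.mpr k.factorial_ne_zero : (k.factorial:ℂ) ≠ 0)]
  rw [htel]
  have h0 : ((k+1).factorial : ℂ) * (P 0 / (((0:ℕ).factorial : ℂ) * (((k:ℂ)+1) - ((0:ℕ):ℂ)))) = (k.factorial : ℂ) := by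
    have hk1 : ((k:ℂ)+1) ≠ 0 := by
      have : ((k:ℂ) + 1) = ((k+1 : ℕ) : ℂ) := by push_cast; ring
      rw [this]; exact Nat.cast_ne_zero.mpr (Nat.succ_ne_zero k)
    have hf2 : (((k+1).factorial : ℂ)) = ((k:ℂ)+1) * (k.factorial : ℂ) := by
      push_cast [Nat.factorial_succ]; ring
    simp [hP, hf2]
    field_simp
  rw [h0]
  ring

lemma main_formula (z : ℂ) (q : ℝ) (k : ℕ) :
    ∀ t : ℝ, 0 < q + t →
      iteratedDeriv k (fun t : ℝ => -(((q + t : ℝ)) : ℂ) ^ (-z) * ((Real.log (q + t) : ℝ) : ℂ)) t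
      = (-1:ℂ)^k * (k.factorial : ℂ) *
          (∑ j ∈ Finset.range k, (∏ i ∈ Finset.range j, (z + (i:ℂ))) / ((j.factorial : ℂ) * ((k:ℂ) - (j:ℂ)))) *
          (((q + t : ℝ)):ℂ) ^ (-z - (k:ℂ))
        + (-1:ℂ)^(k+1) * (∏ i ∈ Finset.range k, (z + (i:ℂ))) *
          (((q + t : ℝ)):ℂ) ^ (-z - (k:ℂ)) * ((Real.log (q + t) : ℝ):ℂ) := by
  induction k with
  | zero =>
    intro t ht
    simp [iteratedDeriv_zero]
  | succ k ih =>
    intro t ht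
    rw [iteratedDeriv_succ]
    have hopen : IsOpen {x : ℝ | 0 < q + x} :=
      isOpen_lt continuous_const (continuous_const.add continuous_id)
    have hmem : {x : ℝ | 0 < q + x} ∈ nhds t := hopen.mem_nhds ht
    have heq : (iteratedDeriv k (fun t : ℝ => -(((q + t : ℝ)) : ℂ) ^ (-z) * ((Real.log (q + t) : ℝ) : ℂ)))
        =ᶠ[nhds t] (fun x : ℝ =>
          (-1:ℂ)^k * (k.factorial : ℂ) *
            (∑ j ∈ Finset.range k, (∏ i ∈ Finset.range j, (z + (i:ℂ))) / ((j.factorial : ℂ) * ((k:ℂ) - (j:ℂ)))) *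
            (((q + x : ℝ)):ℂ) ^ (-z - (k:ℂ))
          + (-1:ℂ)^(k+1) * (∏ i ∈ Finset.range k, (z + (i:ℂ))) *
            (((q + x : ℝ)):ℂ) ^ (-z - (k:ℂ)) * ((Real.log (q + x) : ℝ):ℂ)) :=
      Filter.eventuallyEq_of_mem hmem (fun x hx => ih x hx)
    rw [heq.deriv_eq]
    -- basic derivatives
    have hqt : ((q + t : ℝ) : ℂ) ≠ 0 := by
      exact_mod_cast ne_of_gt ht
    have h1r : HasDerivAt (fun x : ℝ => q + x) 1 t := (hasDerivAt_id t).const_add q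
    have h1 : HasDerivAt (fun x : ℝ => ((q + x : ℝ) : ℂ)) 1 t := by
      simpa using h1r.ofReal_comp
    have hslit : ((q + t : ℝ) : ℂ) ∈ Complex.slitPlane := by
      exact Complex.ofReal_mem_slitPlane.2 ht
    have h2 : HasDerivAt (fun x : ℝ => ((q + x : ℝ) : ℂ) ^ (-z - (k:ℂ)))
        ((-z - (k:ℂ)) * ((q + t : ℝ) : ℂ) ^ (-z - (k:ℂ) - 1) * 1) t := by
      simpa [Function.comp_def] using
        ((Complex.hasStrictDerivAt_cpow_const (c := -z - (k:ℂ)) hslit).hasDerivAt.comp t h1)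
    have h3r : HasDerivAt (fun x : ℝ => Real.log (q + x)) ((q + t)⁻¹ * 1) t :=
      (Real.hasDerivAt_log ht.ne').comp t h1r
    have h3 : HasDerivAt (fun x : ℝ => ((Real.log (q + x) : ℝ) : ℂ)) (((q + t)⁻¹ * 1 : ℝ) : ℂ) t :=
      h3r.ofReal_comp
    set c1 : ℂ := (-1:ℂ)^k * (k.factorial : ℂ) *
      (∑ j ∈ Finset.range k, (∏ i ∈ Finset.range j, (z + (i:ℂ))) / ((j.factorial : ℂ) * ((k:ℂ) - (j:ℂ)))) with hc1
    set c2 : ℂ := (-1:ℂ)^(k+1) * (∏ i ∈ Finset.range k, (z + (i:ℂ))) with hc2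
    have hF : HasDerivAt (fun x : ℝ =>
          c1 * (((q + x : ℝ)):ℂ) ^ (-z - (k:ℂ))
          + c2 * (((q + x : ℝ)):ℂ) ^ (-z - (k:ℂ)) * ((Real.log (q + x) : ℝ):ℂ))
        (c1 * ((-z - (k:ℂ)) * ((q + t : ℝ) : ℂ) ^ (-z - (k:ℂ) - 1) * 1)
          + ((c2 * ((-z - (k:ℂ)) * ((q + t : ℝ) : ℂ) ^ (-z - (k:ℂ) - 1) * 1)) * ((Real.log (q + t) : ℝ):ℂ)
            + (c2 * ((q + t : ℝ) : ℂ) ^ (-z - (k:ℂ))) * (((q + t)⁻¹ * 1 : ℝ) : ℂ))) t :=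
      (h2.const_mul c1).add ((h2.const_mul c2).mul h3)
    rw [hF.deriv]
    -- algebra
    have e1 : (-z - (k:ℂ) - 1) = -z - ((k:ℝ) + 1 : ℝ) := by push_cast; ring
    have e2 : ((q + t : ℝ) : ℂ) ^ (-z - (k:ℂ)) * (((q + t : ℝ) : ℂ))⁻¹
        = ((q + t : ℝ) : ℂ) ^ (-z - (k:ℂ) - 1) := by
      rw [show (-z - (k:ℂ) - 1) = (-z - (k:ℂ)) + (-1) by ring,
        Complex.cpow_add _ _ hqt, Complex.cpow_neg_one]
    simp only [mul_one, Complex.ofReal_inv]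
    rw [show c2 * ((q + t : ℝ) : ℂ) ^ (-z - (k:ℂ)) * (((q + t : ℝ) : ℂ))⁻¹
        = c2 * ((q + t : ℝ) : ℂ) ^ (-z - (k:ℂ) - 1) from by rw [mul_assoc, e2]]
    rw [show (-z - (k:ℂ) - 1) = -z - (((k+1:ℕ)):ℂ) from by push_cast; ring]
    rw [Finset.prod_range_succ, hc1, hc2]
    rw [show (∑ j ∈ Finset.range (k+1), (∏ i ∈ Finset.range j, (z + (i:ℂ))) /
          ((j.factorial : ℂ) * ((((k+1:ℕ)):ℂ) - (j:ℂ))))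
        = ∑ j ∈ Finset.range (k+1), (∏ i ∈ Finset.range j, (z + (i:ℂ))) /
          ((j.factorial : ℂ) * (((k:ℂ)+1) - (j:ℂ))) from by norm_cast]
    linear_combination ((-1:ℂ)^k * ((q + t : ℝ) : ℂ) ^ (-z - (((k+1:ℕ)):ℂ))) * sum_step z k


theorem iteratedDeriv_cpow_log_shift (z : ℂ) (q : ℝ) (hq : 0 < q) (k : ℕ) (hk : 2 ≤ k) :
    iteratedDeriv k
        (fun t : ℝ => -(((q + t : ℝ)) : ℂ) ^ (-z) * ((Real.log (q + t) : ℝ) : ℂ)) 0 =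
      (-1 : ℂ) ^ k * (k.factorial : ℂ) *
          (∑ j ∈ Finset.range k,
            (∏ i ∈ Finset.range j, (z + (i : ℂ))) / ((j.factorial : ℂ) * ((k : ℂ) - (j : ℂ)))) *
          (q : ℂ) ^ (-z - (k : ℂ)) +
        (-1 : ℂ) ^ (k + 1) * (∏ i ∈ Finset.range k, (z + (i : ℂ))) *
          (q : ℂ) ^ (-z - (k : ℂ)) * ((Real.log q : ℝ) : ℂ) := by
  have h := main_formula z q k 0 (by simpa using hq)
  simpa using h
end
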